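/- Let G be a finite group, H, K subgroups, R a ring, and g ∈ G. Then there is an isomorphism of R[H]-R[K]-bimodules R[HgK] ≅ R[Hg] ⊗_{R[K ∩ g⁻¹Hg]} R[K], where R[HgK] and R[Hg] are the free R-modules on the double coset HgK and the coset Hg respectively, with H acting on the left and K acting on the right by translation. -/
import Mathlib


/- Statement 16: for a finite group `G`, subgroups `H, K` and `g ∈ G`, there is
an isomorphism of `R[H]`-`R[K]`-bimodules
`R[HgK] ≅ R[Hg] ⊗_{R[K ∩ g⁻¹Hg]} R[K]`.

Since Mathlib has no balanced tensor product over the noncommutative ring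
`R[K ∩ g⁻¹Hg]`, the right-hand side is realised by its standard concrete
description: `R[Hg] ⊗_{R[L]} R[K] = R[(Hg × K)/L]`, the free `R`-module on the
balanced product `(Hg × K)/L`, where `l ∈ L = K ∩ g⁻¹Hg` identifies
`(x, k) ∼ (x·l, l⁻¹·k)` (this is the balanced tensor product of the free
modules `R[Hg]` and `R[K]`, `R[K]` being a free left `R[L]`-module).
The bimodule structures are the evident ones: `R` acts on coefficients on the
left and on the right, `H` acts by left translation and `K` by right
translation; an iso of bimodules is an additive equivalence commuting with all
four actions. -/

variable {G : Type*} [Group G]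

/-- The subgroup `K ∩ g⁻¹Hg`. -/
def interConj (H K : Subgroup G) (g : G) : Subgroup G :=
  K ⊓ Subgroup.map (MulAut.conj g⁻¹).toMonoidHom H

/-- The double coset `HgK` as a type. -/
abbrev HgKset (H K : Subgroup G) (g : G) : Type _ :=
  {x : G // ∃ h ∈ H, ∃ k ∈ K, x = h * g * k}

/-- The coset `Hg` as a type. -/
abbrev Hgset (H : Subgroup G) (g : G) : Type _ :=
  {x : G // ∃ h ∈ H, x = h * g}

/-- The balancing relation on `Hg × K`: `(x, k) ∼ (x·l, l⁻¹·k)` for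
`l ∈ K ∩ g⁻¹Hg`. -/
def balSetoid (H K : Subgroup G) (g : G) : Setoid (Hgset H g × K) where
  r a b := ∃ l ∈ interConj H K g,
    (b.1 : G) = (a.1 : G) * l ∧ (b.2 : G) = l⁻¹ * (a.2 : G)
  iseqv := by
    constructor
    · intro a; exact ⟨1, one_mem _, by simp, by simp⟩
    · rintro a b ⟨l, hl, h1, h2⟩
      exact ⟨l⁻¹, inv_mem hl, by rw [h1]; group, by rw [h2]; group⟩
    · rintro a b c ⟨l, hl, h1, h2⟩ ⟨l', hl', h1', h2'⟩
      exact ⟨l * l', mul_mem hl hl', by rw [h1', h1]; group,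
        by rw [h2', h2]; group⟩

/-- Left translation by `h ∈ H` on `HgK`. -/
def leftHmulHgK (H K : Subgroup G) (g : G) (h : H) (x : HgKset H K g) :
    HgKset H K g :=
  ⟨(h : G) * (x : G), by
    obtain ⟨h', hh', k, hk, hx⟩ := x.2
    exact ⟨(h : G) * h', mul_mem h.2 hh', k, hk, by rw [hx]; group⟩⟩

/-- Right translation by `k ∈ K` on `HgK`. -/
def rightKmulHgK (H K : Subgroup G) (g : G) (k : K) (x : HgKset H K g) :
    HgKset H K g :=
  ⟨(x : G) * (k : G), by
    obtain ⟨h', hh', k', hk', hx⟩ := x.2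
    exact ⟨h', hh', k' * (k : G), mul_mem hk' k.2, by rw [hx]; group⟩⟩

/-- Left translation by `h ∈ H` on the balanced product `(Hg × K)/L`. -/
def leftHmulBal (H K : Subgroup G) (g : G) (h : H) :
    Quotient (balSetoid H K g) → Quotient (balSetoid H K g) :=
  Quotient.map
    (fun a => (⟨(h : G) * (a.1 : G), by
        obtain ⟨h', hh', hx⟩ := a.1.2
        exact ⟨(h : G) * h', mul_mem h.2 hh', by rw [hx]; group⟩⟩, a.2))
    (by rintro a b ⟨l, hl, h1, h2⟩
        refine ⟨l, hl, ?_, h2⟩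
        show (h : G) * (b.1 : G) = (h : G) * (a.1 : G) * l
        rw [h1]; group)

/-- Right translation by `k ∈ K` on the balanced product `(Hg × K)/L`. -/
def rightKmulBal (H K : Subgroup G) (g : G) (k : K) :
    Quotient (balSetoid H K g) → Quotient (balSetoid H K g) :=
  Quotient.map (fun a => (a.1, a.2 * k))
    (by rintro a b ⟨l, hl, h1, h2⟩
        refine ⟨l, hl, h1, ?_⟩
        show (b.2 : G) * (k : G) = l⁻¹ * ((a.2 : G) * (k : G))
        rw [h2]; group)

def balToHgK (H K : Subgroup G) (g : G) :
    Quotient (balSetoid H K g) → HgKset H K g :=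
  Quotient.lift
    (fun a => ⟨(a.1 : G) * (a.2 : G), by
      obtain ⟨h, hh, hx⟩ := a.1.2
      exact ⟨h, hh, a.2, a.2.2, by rw [hx]⟩⟩)
    (by
      rintro a b ⟨l, hl, h1, h2⟩
      apply Subtype.ext
      show (a.1 : G) * (a.2 : G) = (b.1 : G) * (b.2 : G)
      rw [h1, h2]; group)

theorem balToHgK_bijective (H K : Subgroup G) (g : G) :
    Function.Bijective (balToHgK H K g) := by
  constructor
  · rintro ⟨a⟩ ⟨b⟩ hab
    obtain ⟨x, k⟩ := a
    obtain ⟨x', k'⟩ := b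
    have h : (x : G) * (k : G) = (x' : G) * (k' : G) := congrArg Subtype.val hab
    obtain ⟨h1, hh1, hx1⟩ := x.2
    obtain ⟨h2, hh2, hx2⟩ := x'.2
    apply Quotient.sound
    have hx' : (x' : G) = (x : G) * (k : G) * (k' : G)⁻¹ := by
      rw [eq_mul_inv_iff_mul_eq]; exact h.symm
    have hinv : (x : G)⁻¹ * (x' : G) = (k : G) * (k' : G)⁻¹ := by
      rw [hx']; group
    refine ⟨(k : G) * (k' : G)⁻¹, ⟨K.mul_mem k.2 (K.inv_mem k'.2), ?_⟩, ?_, ?_⟩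
    · refine ⟨h1⁻¹ * h2, H.mul_mem (H.inv_mem hh1) hh2, ?_⟩
      show g⁻¹ * (h1⁻¹ * h2) * g⁻¹⁻¹ = (k : G) * (k' : G)⁻¹
      rw [← hinv, hx1, hx2]; group
    · show (x' : G) = (x : G) * ((k : G) * (k' : G)⁻¹)
      rw [hx']; group
    · show (k' : G) = ((k : G) * (k' : G)⁻¹)⁻¹ * (k : G)
      group
  · rintro ⟨x, h, hh, k, hk, hx⟩
    refine ⟨Quotient.mk _ (⟨⟨h * g, h, hh, rfl⟩, ⟨k, hk⟩⟩ : Hgset H g × K), ?_⟩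
    exact Subtype.ext hx.symm

theorem balToHgK_left (H K : Subgroup G) (g : G) (h : H)
    (q : Quotient (balSetoid H K g)) :
    balToHgK H K g (leftHmulBal H K g h q) =
      leftHmulHgK H K g h (balToHgK H K g q) := by
  induction q using Quotient.ind with
  | _ a => exact Subtype.ext (mul_assoc _ _ _)

theorem balToHgK_right (H K : Subgroup G) (g : G) (k : K)
    (q : Quotient (balSetoid H K g)) :
    balToHgK H K g (rightKmulBal H K g k q) =
      rightKmulHgK H K g k (balToHgK H K g q) := by
  induction q using Quotient.ind with
  | _ a => exact Subtype.ext (mul_assoc _ _ _).symm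

/-- Mackey's bimodule decomposition for a finite group:
`R[HgK] ≅ R[Hg] ⊗_{R[K ∩ g⁻¹Hg]} R[K]` as `R[H]`-`R[K]`-bimodules, the
tensor product being realised as the free module on the balanced product
`(Hg × K)/(K ∩ g⁻¹Hg)`. -/
theorem doubleCoset_tensor_decomposition
    (R : Type*) [Ring R] (G : Type*) [Group G] [Finite G]
    (H K : Subgroup G) (g : G) :
    ∃ e : (HgKset H K g →₀ R) ≃+ (Quotient (balSetoid H K g) →₀ R),
      (∀ (r : R) (v : HgKset H K g →₀ R), e (r • v) = r • e v) ∧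
      (∀ (r : R) (v : HgKset H K g →₀ R),
        e (MulOpposite.op r • v) = MulOpposite.op r • e v) ∧
      (∀ (h : H) (v : HgKset H K g →₀ R),
        e (Finsupp.mapDomain (leftHmulHgK H K g h) v) =
          Finsupp.mapDomain (leftHmulBal H K g h) (e v)) ∧
      (∀ (k : K) (v : HgKset H K g →₀ R),
        e (Finsupp.mapDomain (rightKmulHgK H K g k) v) =
          Finsupp.mapDomain (rightKmulBal H K g k) (e v)) := by

  classical
  let E : Quotient (balSetoid H K g) ≃ HgKset H K g :=
    Equiv.ofBijective _ (balToHgK_bijective H K g)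
  have hEleft : ∀ (h : H) (x : HgKset H K g),
      E.symm (leftHmulHgK H K g h x) = leftHmulBal H K g h (E.symm x) := by
    intro h x
    apply E.injective
    rw [E.apply_symm_apply]
    show _ = balToHgK H K g (leftHmulBal H K g h (E.symm x))
    rw [balToHgK_left]
    show _ = leftHmulHgK H K g h (E (E.symm x))
    rw [E.apply_symm_apply]
  have hEright : ∀ (k : K) (x : HgKset H K g),
      E.symm (rightKmulHgK H K g k x) = rightKmulBal H K g k (E.symm x) := by
    intro k x
    apply E.injective
    rw [E.apply_symm_apply]
    show _ = balToHgK H K g (rightKmulBal H K g k (E.symm x))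
    rw [balToHgK_right]
    show _ = rightKmulHgK H K g k (E (E.symm x))
    rw [E.apply_symm_apply]
  refine ⟨Finsupp.domCongr E.symm, ?_, ?_, ?_, ?_⟩
  · intro r v
    ext a
    simp [Finsupp.domCongr_apply, Finsupp.equivMapDomain_apply]
  · intro r v
    ext a
    simp [Finsupp.domCongr_apply, Finsupp.equivMapDomain_apply]
  · intro h v
    rw [Finsupp.domCongr_apply, Finsupp.domCongr_apply,
      Finsupp.equivMapDomain_eq_mapDomain, Finsupp.equivMapDomain_eq_mapDomain,
      ← Finsupp.mapDomain_comp, ← Finsupp.mapDomain_comp]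
    exact Finsupp.mapDomain_congr fun x _ => hEleft h x
  · intro k v
    rw [Finsupp.domCongr_apply, Finsupp.domCongr_apply,
      Finsupp.equivMapDomain_eq_mapDomain, Finsupp.equivMapDomain_eq_mapDomain,
      ← Finsupp.mapDomain_comp, ← Finsupp.mapDomain_comp]
    exact Finsupp.mapDomain_congr fun x _ => hEright k x
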